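/- On ℂⁿ (n ≥ 2), let Z_k = i z_k ∂/∂z_k for k = 1,…,n, and let V_j = Σ_k f_j^k ∂/∂z_k be a polynomial vector field of degree ≤ 2 with no linear terms and f_j^k(0) = δ_j^k. If [V_j, Z_k] = 0 for all k ≠ j, then V_j = Σ_{k≠j} α_j^k z_k z_j ∂/∂z_k + (1 + α_j^j z_j²) ∂/∂z_j for some complex constants α_j^k. -/

import Mathlib

open Complex

/-- The Lie bracket of two holomorphic vector fields,
`[X,Y](p) = DY(p)(X(p)) − DX(p)(Y(p))`. -/
noncomputable def bracket {E : Type*} [NormedAddCommGroup E] [NormedSpace ℂ E]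
    (X Y : E → E) : E → E :=
  fun p => fderiv ℂ Y p (X p) - fderiv ℂ X p (Y p)

/-- On `ℂⁿ` (`n ≥ 2`), let `Z_k = i z_k ∂/∂z_k` and let
`V = Σ_k f^k ∂/∂z_k` be a polynomial vector field of degree ≤ 2 with no linear
terms and `f^k(0) = δ_j^k` (written as a constant plus a quadratic part with
coefficients `q`). If `[V, Z_k] = 0` for every `k ≠ j`, then
`V = Σ_{k≠j} α^k z_k z_j ∂/∂z_k + (1 + α^j z_j²) ∂/∂z_j` for some constants `α^k`. -/
theorem quadratic_field_form (n : ℕ) (hn : 2 ≤ n) (j : Fin n)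
    (V : (Fin n → ℂ) → (Fin n → ℂ)) (q : Fin n → Fin n → Fin n → ℂ)
    (hV : ∀ z : Fin n → ℂ, ∀ k : Fin n,
      V z k = (if k = j then 1 else 0) + ∑ l, ∑ m, q k l m * z l * z m)
    (Z : Fin n → (Fin n → ℂ) → (Fin n → ℂ))
    (hZ : ∀ k : Fin n, Z k = fun z => fun m => if m = k then I * z k else 0)
    (hbr : ∀ k : Fin n, k ≠ j → bracket V (Z k) = 0) :
    ∃ α : Fin n → ℂ, ∀ z : Fin n → ℂ, ∀ k : Fin n,
      V z k = (if k = j then 1 else 0) + α k * z k * z j := by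
  classical
  have hVfun : V = fun z k => (if k = j then (1:ℂ) else 0) + ∑ l, ∑ m, q k l m * z l * z m := by
    funext z k; exact hV z k
  set ZL : Fin n → (Fin n → ℂ) →L[ℂ] (Fin n → ℂ) :=
    fun k => ContinuousLinearMap.pi
      (fun m => if m = k then I • (ContinuousLinearMap.proj k) else 0) with hZL
  have hZeq : ∀ k, Z k = ⇑(ZL k) := by
    intro k; rw [hZ k]; funext z m
    by_cases h : m = k <;> simp [hZL, ContinuousLinearMap.pi_apply, h]
  have hDV : ∀ p : Fin n → ℂ, HasFDerivAt V
      (ContinuousLinearMap.pi (fun k' => ∑ l, ∑ m,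
        ((q k' l m * p l) • ContinuousLinearMap.proj m
          + p m • ((q k' l m) • (ContinuousLinearMap.proj l : (Fin n → ℂ) →L[ℂ] ℂ))))) p := by
    intro p
    rw [hVfun]
    refine hasFDerivAt_pi.mpr fun k' => ?_
    refine HasFDerivAt.const_add _ ?_
    refine HasFDerivAt.fun_sum fun l _ => HasFDerivAt.fun_sum fun m _ => ?_
    exact (((ContinuousLinearMap.proj l : (Fin n → ℂ) →L[ℂ] ℂ).hasFDerivAt).const_mul
      (q k' l m)).mul ((ContinuousLinearMap.proj m : (Fin n → ℂ) →L[ℂ] ℂ).hasFDerivAt)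
  -- the bracket identity, componentwise
  have key : ∀ k : Fin n, k ≠ j → ∀ p : Fin n → ℂ, ∀ k' : Fin n,
      (if k' = k then I * V p k else 0)
        = I * p k * (∑ m, (q k' m k + q k' k m) * p m) := by
    intro k hk p k'
    have h0 := congrFun (congrFun (hbr k hk) p) k'
    simp only [bracket, Pi.zero_apply, Pi.sub_apply, sub_eq_zero] at h0
    rw [hZeq k, ContinuousLinearMap.fderiv, (hDV p).fderiv] at h0
    have hL : (ZL k) (V p) k' = (if k' = k then I * V p k else 0) := by
      by_cases h : k' = k <;>
        simp [hZL, ContinuousLinearMap.pi_apply, h]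
    have hw : ∀ l, (ZL k) p l = (if l = k then I * p k else 0) := by
      intro l
      by_cases h : l = k <;>
        simp [hZL, ContinuousLinearMap.pi_apply, h]
    rw [hL] at h0
    rw [h0]
    simp only [ContinuousLinearMap.pi_apply, ContinuousLinearMap.sum_apply,
      ContinuousLinearMap.add_apply, ContinuousLinearMap.smul_apply,
      ContinuousLinearMap.proj_apply, smul_eq_mul, hw]
    have e1 : ∀ l, (∑ m, (q k' l m * p l * (if m = k then I * p k else 0)
          + p m * (q k' l m * (if l = k then I * p k else 0))))
        = q k' l k * p l * (I * p k)
          + (if l = k then ∑ m, p m * (q k' l m * (I * p k)) else 0) := by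
      intro l
      rw [Finset.sum_add_distrib]
      congr 1
      · simp [mul_ite, mul_zero, Finset.sum_ite_eq']
      · by_cases h : l = k <;> simp [h, mul_ite, mul_zero]
    rw [Finset.sum_congr rfl fun l _ => e1 l, Finset.sum_add_distrib,
      Finset.sum_ite_eq' Finset.univ k, if_pos (Finset.mem_univ k), Finset.mul_sum,
      ← Finset.sum_add_distrib]
    exact Finset.sum_congr rfl fun m _ => by ring
  have cancelI : ∀ x : ℂ, I * x = 0 → x = 0 := by
    intro x hx
    rcases mul_eq_zero.1 hx with h | h
    · exact absurd h I_ne_zero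
    · exact h
  -- part 1: for k ≠ j and k' ≠ k :  q k' m k + q k' k m = 0 for all m
  have hq1 : ∀ k : Fin n, k ≠ j → ∀ k' : Fin n, k' ≠ k → ∀ m : Fin n,
      q k' m k + q k' k m = 0 := by
    intro k hk k' hk' m
    have hFk : q k' k k + q k' k k = 0 := by
      have h := key k hk (fun i => if i = k then (1:ℂ) else 0) k'
      rw [if_neg hk'] at h
      simp only [if_pos rfl, mul_one, mul_ite, mul_zero, Finset.sum_ite_eq',
        Finset.mem_univ, if_true] at h
      apply cancelI
      linear_combination -h
    by_cases hm : m = k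
    · rw [hm]; exact hFk
    · have h := key k hk (fun i => if i = k then (1:ℂ) else if i = m then 1 else 0) k'
      rw [if_neg hk'] at h
      have hsum : (∑ m' : Fin n, (q k' m' k + q k' k m') *
          ((fun i => if i = k then (1:ℂ) else if i = m then 1 else 0) m'))
          = (q k' k k + q k' k k) + (q k' m k + q k' k m) := by
        have hrw : ∀ m' : Fin n, (q k' m' k + q k' k m') *
            ((fun i => if i = k then (1:ℂ) else if i = m then 1 else 0) m')
            = (if m' = k then (q k' k k + q k' k k) else 0)
              + (if m' = m then (q k' m k + q k' k m) else 0) := by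
          intro m'
          by_cases h1 : m' = k
          · subst h1; simp [Ne.symm hm]
          · by_cases h2 : m' = m
            · subst h2; simp [h1, hm]
            · simp [h1, h2]
        rw [Finset.sum_congr rfl fun m' _ => hrw m', Finset.sum_add_distrib]
        simp [Finset.sum_ite_eq']
      rw [hsum, if_pos (rfl : k = k)] at h
      have h' : (q k' k k + q k' k k) + (q k' m k + q k' k m) = 0 := by
        apply cancelI
        linear_combination -h
      linear_combination h' - hFk
  -- part 2: for k ≠ j :  q k j j = 0 and q k k k = 0
  have hq2 : ∀ k : Fin n, k ≠ j → q k j j = 0 ∧ q k k k = 0 := by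
    intro k hk
    have hev : ∀ a : Fin n,
        (∑ l, ∑ m, q k l m * ((fun i => if i = a then (1:ℂ) else 0) l)
          * ((fun i => if i = a then (1:ℂ) else 0) m)) = q k a a := by
      intro a
      simp [mul_ite, mul_one, mul_zero, ite_mul, zero_mul, Finset.sum_ite_eq']
    constructor
    · have h := key k hk (fun i => if i = j then (1:ℂ) else 0) k
      rw [if_pos rfl, hV, hev j] at h
      rw [if_neg hk] at h
      simp only [if_neg hk, mul_zero, zero_mul, zero_add] at h
      apply cancelI
      linear_combination h
    · have h := key k hk (fun i => if i = k then (1:ℂ) else 0) k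
      rw [if_pos rfl, hV, hev k] at h
      rw [if_neg hk] at h
      simp only [if_pos rfl, mul_one, mul_ite, mul_zero, Finset.sum_ite_eq',
        Finset.mem_univ, if_true, zero_add] at h
      apply cancelI
      linear_combination -h
  -- symmetrization
  have hsym : ∀ (c : Fin n → Fin n → ℂ) (z : Fin n → ℂ),
      (∑ l, ∑ m, c l m * z l * z m) = ∑ l, ∑ m, c m l * z l * z m := by
    intro c z
    rw [Finset.sum_comm]
    exact Finset.sum_congr rfl fun m _ => Finset.sum_congr rfl fun l _ => by ring
  have sum2 : ∀ (X : ℂ) (a b : Fin n),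
      (∑ l, ∑ m, (if l = a then (1:ℂ) else 0) * (if m = b then (1:ℂ) else 0) * X) = X := by
    intro X a b
    have h1 : ∀ l : Fin n, (∑ m, (if l = a then (1:ℂ) else 0) * (if m = b then (1:ℂ) else 0) * X)
        = (if l = a then (1:ℂ) else 0) * X := by
      intro l
      by_cases h : l = a <;>
        simp [h, ite_mul, zero_mul, one_mul, Finset.sum_ite_eq']
    rw [Finset.sum_congr rfl fun l _ => h1 l]
    simp [ite_mul, zero_mul, one_mul, Finset.sum_ite_eq']
  have main : ∀ (k : Fin n) (z : Fin n → ℂ),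
      (∑ l, ∑ m, q k l m * z l * z m)
        = (if k = j then q j j j else q k k j + q k j k) * z k * z j := by
    intro k z
    have h2A : (2:ℂ) * (∑ l, ∑ m, q k l m * z l * z m)
        = ∑ l, ∑ m, (q k l m + q k m l) * z l * z m := by
      rw [two_mul]
      nth_rewrite 2 [hsym (fun l m => q k l m) z]
      rw [← Finset.sum_add_distrib]
      refine Finset.sum_congr rfl fun l _ => ?_
      rw [← Finset.sum_add_distrib]
      exact Finset.sum_congr rfl fun m _ => by ring
    by_cases hkj : k = j
    · subst hkj
      have hz : ∀ l m : Fin n, (q k l m + q k m l) * z l * z m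
          = (if l = k then (1:ℂ) else 0) * (if m = k then (1:ℂ) else 0)
            * ((q k k k + q k k k) * z k * z k) := by
        intro l m
        by_cases hl : l = k
        · subst hl
          by_cases hm2 : m = l
          · subst hm2; simp
          · have h := hq1 m hm2 l (Ne.symm hm2) l
            simp only [if_pos rfl, if_neg hm2, one_mul, mul_zero, zero_mul]
            rw [show q l l m + q l m l = 0 by linear_combination h]
            ring
        · have h := hq1 l hl k (Ne.symm hl) m
          rw [show q k l m + q k m l = 0 by linear_combination h]
          simp [hl]
      rw [Finset.sum_congr rfl fun l _ => Finset.sum_congr rfl fun m _ => hz l m,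
        sum2 ((q k k k + q k k k) * z k * z k) k k] at h2A
      rw [if_pos rfl]
      have h2 : (2:ℂ) * (∑ l, ∑ m, q k l m * z l * z m)
          = (2:ℂ) * (q k k k * z k * z k) := by
        rw [h2A]; ring
      exact mul_left_cancel₀ two_ne_zero h2
    · have hkkk := (hq2 k hkj).2
      have hkjj := (hq2 k hkj).1
      have hz : ∀ l m : Fin n, (q k l m + q k m l) * z l * z m
          = (if l = k then (1:ℂ) else 0) * (if m = j then (1:ℂ) else 0)
              * ((q k k j + q k j k) * z k * z j)
            + (if l = j then (1:ℂ) else 0) * (if m = k then (1:ℂ) else 0)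
              * ((q k k j + q k j k) * z k * z j) := by
        intro l m
        by_cases hl1 : l = k
        · by_cases hm1 : m = j
          · rw [hl1, hm1]
            simp [hkj, Ne.symm hkj] <;> ring
          · by_cases hm2 : m = k
            · rw [hl1, hm2, show q k k k + q k k k = 0 by linear_combination 2 * hkkk]
              simp [hkj] <;> ring
            · rw [hl1]
              rw [show q k k m + q k m k = 0 from by
                linear_combination hq1 m hm1 k (fun h' => hm2 h'.symm) k]
              simp [hkj, hm1, hm2] <;> ring
        · by_cases hl2 : l = j
          · by_cases hm1 : m = k
            · rw [hl2, hm1]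
              simp [hkj, Ne.symm hkj] <;> ring
            · by_cases hm2 : m = j
              · rw [hl2, hm2, show q k j j + q k j j = 0 by linear_combination 2 * hkjj]
                simp [Ne.symm hkj] <;> ring
              · rw [hl2]
                rw [show q k j m + q k m j = 0 from by
                  linear_combination hq1 m hm2 k (fun h' => hm1 h'.symm) j]
                simp [hm1, hm2, Ne.symm hkj] <;> ring
          · rw [show q k l m + q k m l = 0 from by
              linear_combination hq1 l hl2 k (fun h' => hl1 h'.symm) m]
            simp [hl1, hl2] <;> ring
      rw [Finset.sum_congr rfl fun l _ => Finset.sum_congr rfl fun m _ => hz l m] at h2A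
      simp only [Finset.sum_add_distrib] at h2A
      rw [sum2 ((q k k j + q k j k) * z k * z j) k j,
        sum2 ((q k k j + q k j k) * z k * z j) j k] at h2A
      rw [if_neg hkj]
      have h2 : (2:ℂ) * (∑ l, ∑ m, q k l m * z l * z m)
          = (2:ℂ) * ((q k k j + q k j k) * z k * z j) := by
        rw [h2A]; ring
      exact mul_left_cancel₀ two_ne_zero h2
  refine ⟨fun k => if k = j then q j j j else q k k j + q k j k, ?_⟩
  intro z k
  rw [hV z k, main k z]
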